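/- Full escape theorem: Let f : ℝ^d → ℝ be L_g-smooth globally, and let M ⊆ ℝ^d have diameter r and contain a critical point x†. Let P(M) = {x ∉ M : ‖x - x†‖ ≤ r√(γ²L_g² - 3)}. Assume on P(M), f is L-smooth toward a minimum x⋆ (‖∇f(x)‖ ≤ L‖x - x⋆‖) and μ⋆-OPSC toward x⋆, with ‖x⋆ - x†‖ ≥ r(1 + √((γ²L_g² - 3)(1 - γμ⋆)))/(1 - √(1 - γμ⋆)); assume on M, f is μ†-OPSC toward x† with μ† > 2L²/μ⋆; assume the step size satisfies 2/μ† < γ ≤ μ⋆/L². Then if a GD iterate x_t ∈ M with x_t ≠ x†, there exists k ≥ 1 with x_{t+k} ∉ M, and either ‖x_{t+k} - x⋆‖ ≤ ‖x† - x⋆‖ - r or ‖x_{t+k+1} - x⋆‖ ≤ ‖x† - x⋆‖ - r. -/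

import Mathlib

open scoped RealInnerProductSpace

private lemma step_sq {d : ℕ} (a g : EuclideanSpace ℝ (Fin d)) (γ : ℝ) :
    ‖a - γ • g‖ ^ 2 = ‖a‖ ^ 2 - 2 * γ * ⟪g, a⟫ + γ ^ 2 * ‖g‖ ^ 2 := by
  rw [norm_sub_sq_real, real_inner_smul_right, real_inner_comm, norm_smul, mul_pow,
    Real.norm_eq_abs, sq_abs]
  ring

set_option maxHeartbeats 1000000 in
/-- full escape theorem: Under global L_g-smoothness, μ†-OPSC toward `x†`
inside `M` (of diameter `r`), L-smoothness and μ⋆-OPSC toward `x⋆` on the surrounding region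
`P(M)`, the distance condition on `‖x⋆ - x†‖` and step size `2/μ† < γ ≤ μ⋆/L²`: if a GD
iterate `x_t ∈ M`, `x_t ≠ x†`, then GD escapes `M` and reaches a point with distance to
`x⋆` at most `‖x† - x⋆‖ - r`. -/
theorem stmt12 {d : ℕ} (Lg L μstar μdag γ r : ℝ)
    (hr : 0 < r) (hLg : 0 < Lg) (hL : 0 < L) (hLLg : L < Lg)
    (hμstar : 0 < μstar) (hμL : μstar ≤ L)
    (hμdag : μdag > 2 * L ^ 2 / μstar)
    (hγ1 : 2 / μdag < γ) (hγ2 : γ ≤ μstar / L ^ 2)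
    (f : EuclideanSpace ℝ (Fin d) → ℝ)
    (f' : EuclideanSpace ℝ (Fin d) → EuclideanSpace ℝ (Fin d))
    (M : Set (EuclideanSpace ℝ (Fin d)))
    (xdag xstar : EuclideanSpace ℝ (Fin d))
    (hxdagM : xdag ∈ M)
    (hgrad : ∀ x, HasGradientAt f (f' x) x)
    (hlipg : ∀ x y, ‖f' x - f' y‖ ≤ Lg * ‖x - y‖)
    (hcritdag : f' xdag = 0) (hcritstar : f' xstar = 0)
    (hdiam : ∀ x ∈ M, ∀ y ∈ M, ‖x - y‖ ≤ r)
    -- conditions on the surrounding region P(M)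
    (hP : ∀ x, x ∉ M → ‖x - xdag‖ ≤ r * Real.sqrt (γ ^ 2 * Lg ^ 2 - 3) →
        ⟪f' x, x - xstar⟫ ≥ μstar * ‖x - xstar‖ ^ 2 ∧ ‖f' x‖ ≤ L * ‖x - xstar‖)
    -- the (global) minimum is sufficiently far from M
    (hdist : ‖xstar - xdag‖ ≥
        r * (1 + Real.sqrt ((γ ^ 2 * Lg ^ 2 - 3) * (1 - γ * μstar))) /
          (1 - Real.sqrt (1 - γ * μstar)))
    -- μ†-OPSC toward x† on M
    (hM : ∀ x ∈ M, ⟪f' x, x - xdag⟫ ≥ μdag * ‖x - xdag‖ ^ 2)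
    (x : ℕ → EuclideanSpace ℝ (Fin d))
    (hiter : ∀ s, x (s + 1) = x s - γ • f' (x s))
    (t : ℕ) (hxt : x t ∈ M) (hne : x t ≠ xdag) :
    ∃ k : ℕ, 1 ≤ k ∧ x (t + k) ∉ M ∧
      (‖x (t + k) - xstar‖ ≤ ‖xdag - xstar‖ - r ∨
        ‖x (t + k + 1) - xstar‖ ≤ ‖xdag - xstar‖ - r) := by
  classical
  -- basic positivity facts
  have hμdagpos : 0 < μdag := lt_trans (by positivity) hμdag
  have hγpos : 0 < γ := lt_trans (by positivity) hγ1
  have hγμdag : 2 < γ * μdag := by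
    have := (div_lt_iff₀ hμdagpos).mp hγ1; linarith
  have hγL : γ * L ^ 2 ≤ μstar := (le_div_iff₀ (by positivity)).mp hγ2
  have hγμstar1 : γ * μstar ≤ 1 := by
    have h1 : γ * μstar * L ^ 2 ≤ μstar * μstar := by nlinarith
    have h2 : μstar * μstar ≤ L ^ 2 := by nlinarith
    nlinarith [sq_nonneg L]
  have hγμstarpos : 0 < γ * μstar := by positivity
  have h1γ : (0:ℝ) ≤ 1 - γ * μstar := by linarith
  -- expansion step inside M
  have grow : ∀ s, x s ∈ M →
      (γ * μdag - 1) * ‖x s - xdag‖ ≤ ‖x (s + 1) - xdag‖ := by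
    intro s hs
    have hMg := hM _ hs
    have hCS : ⟪f' (x s), x s - xdag⟫ ≤ ‖f' (x s)‖ * ‖x s - xdag‖ := real_inner_le_norm _ _
    have hg : μdag * ‖x s - xdag‖ ≤ ‖f' (x s)‖ := by
      rcases eq_or_lt_of_le (norm_nonneg (x s - xdag)) with h0 | h0
      · rw [← h0, mul_zero]; exact norm_nonneg (f' (x s))
      · nlinarith
    have hstep : x (s + 1) - xdag = (x s - xdag) - γ • f' (x s) := by
      rw [hiter]; abel
    rw [hstep]
    have h1 : ‖γ • f' (x s)‖ - ‖x s - xdag‖ ≤ ‖x s - xdag - γ • f' (x s)‖ := by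
      exact le_trans (norm_sub_norm_le _ _) (le_of_eq (norm_sub_rev _ _))
    rw [norm_smul, Real.norm_eq_abs, abs_of_pos hγpos] at h1
    have h2 := mul_le_mul_of_nonneg_left hg hγpos.le
    nlinarith [norm_nonneg (x s - xdag)]
  -- squared escape bound
  have hμdagLg : μdag ≤ Lg := by
    have hMg := hM _ hxt
    have hCS : ⟪f' (x t), x t - xdag⟫ ≤ ‖f' (x t)‖ * ‖x t - xdag‖ := real_inner_le_norm _ _
    have hlip : ‖f' (x t)‖ ≤ Lg * ‖x t - xdag‖ := by
      have := hlipg (x t) xdag; rwa [hcritdag, sub_zero] at this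
    have h0 : 0 < ‖x t - xdag‖ := by
      rw [norm_pos_iff, sub_ne_zero]; exact hne
    have h5 : ‖f' (x t)‖ * ‖x t - xdag‖ ≤ Lg * ‖x t - xdag‖ * ‖x t - xdag‖ :=
      mul_le_mul_of_nonneg_right hlip (norm_nonneg _)
    nlinarith [mul_pos h0 h0]
  have hc : (0:ℝ) < γ ^ 2 * Lg ^ 2 - 3 := by
    have h2 : 2 < γ * Lg := lt_of_lt_of_le hγμdag (mul_le_mul_of_nonneg_left hμdagLg hγpos.le)
    nlinarith [h2]
  set c : ℝ := γ ^ 2 * Lg ^ 2 - 3 with hcdef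
  have esc : ∀ s, x s ∈ M → ‖x (s + 1) - xdag‖ ^ 2 ≤ c * ‖x s - xdag‖ ^ 2 := by
    intro s hs
    have hMg := hM _ hs
    have hlip : ‖f' (x s)‖ ≤ Lg * ‖x s - xdag‖ := by
      have := hlipg (x s) xdag; rwa [hcritdag, sub_zero] at this
    have hstep : x (s + 1) - xdag = (x s - xdag) - γ • f' (x s) := by
      rw [hiter]; abel
    rw [hstep, step_sq]
    have hsq : ‖f' (x s)‖ ^ 2 ≤ (Lg * ‖x s - xdag‖) ^ 2 :=
      pow_le_pow_left₀ (norm_nonneg _) hlip 2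
    nlinarith [sq_nonneg ‖x s - xdag‖, sq_nonneg γ, mul_pos hγpos hγpos,
      mul_le_mul_of_nonneg_left hMg (le_of_lt (by positivity : (0:ℝ) < 2 * γ)),
      mul_le_mul_of_nonneg_left hsq (sq_nonneg γ),
      mul_nonneg (by linarith : (0:ℝ) ≤ γ * μdag - 2) (sq_nonneg ‖x s - xdag‖)]
  -- existence of an escape time
  have hex : ∃ k, x (t + k) ∉ M := by
    by_contra hall
    push_neg at hall
    have hq : (1:ℝ) < γ * μdag - 1 := by linarith
    have growth : ∀ s, (γ * μdag - 1) ^ s * ‖x t - xdag‖ ≤ ‖x (t + s) - xdag‖ := by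
      intro s
      induction s with
      | zero => simp
      | succ n ih =>
        calc (γ * μdag - 1) ^ (n + 1) * ‖x t - xdag‖
            = (γ * μdag - 1) * ((γ * μdag - 1) ^ n * ‖x t - xdag‖) := by ring
          _ ≤ (γ * μdag - 1) * ‖x (t + n) - xdag‖ :=
              mul_le_mul_of_nonneg_left ih (by linarith)
          _ ≤ ‖x (t + n + 1) - xdag‖ := grow (t + n) (hall n)
    have hε : 0 < ‖x t - xdag‖ := by rw [norm_pos_iff, sub_ne_zero]; exact hne
    obtain ⟨s, hs⟩ := pow_unbounded_of_one_lt (r / ‖x t - xdag‖) hq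
    have hbig : r < (γ * μdag - 1) ^ s * ‖x t - xdag‖ := by
      rw [div_lt_iff₀ hε] at hs; linarith
    have := hdiam (x (t + s)) (hall s) xdag hxdagM
    have := growth s
    linarith
  -- first escape time
  have hk0 : x (t + Nat.find hex) ∉ M := Nat.find_spec hex
  have hk0ne : Nat.find hex ≠ 0 := by
    intro h; rw [h] at hk0; exact hk0 (by simpa using hxt)
  obtain ⟨m, hm⟩ := Nat.exists_eq_succ_of_ne_zero hk0ne
  have hprev : x (t + m) ∈ M := by
    have := Nat.find_min hex (m := m) (by omega)
    exact not_not.mp this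
  rw [hm] at hk0
  have hk0' : x (t + m + 1) ∉ M := by
    have : t + (m + 1) = t + m + 1 := by omega
    rwa [this] at hk0
  set y := x (t + m + 1) with hy
  -- y is within the annulus
  have hybound : ‖y - xdag‖ ≤ r * Real.sqrt c := by
    have h1 : ‖y - xdag‖ ^ 2 ≤ c * r ^ 2 := by
      have h2 := esc (t + m) hprev
      have h3 : ‖x (t + m) - xdag‖ ≤ r := hdiam _ hprev _ hxdagM
      have h4 : ‖x (t + m) - xdag‖ ^ 2 ≤ r ^ 2 :=
        pow_le_pow_left₀ (norm_nonneg _) h3 2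
      nlinarith
    have h5 : ‖y - xdag‖ ≤ Real.sqrt (c * r ^ 2) := by
      rw [← Real.sqrt_sq (norm_nonneg _)]
      exact Real.sqrt_le_sqrt h1
    rwa [Real.sqrt_mul hc.le, Real.sqrt_sq hr.le, mul_comm] at h5
  obtain ⟨hP1, hP2⟩ := hP y hk0' hybound
  -- contraction step from y
  set ρ : ℝ := Real.sqrt (1 - γ * μstar) with hρdef
  have hρnn : 0 ≤ ρ := Real.sqrt_nonneg _
  have hρsq : ρ ^ 2 = 1 - γ * μstar := Real.sq_sqrt h1γ
  have hρlt1 : ρ < 1 := by nlinarith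
  have hcontr : ‖x (t + m + 1 + 1) - xstar‖ ≤ ρ * ‖y - xstar‖ := by
    have hstep : x (t + m + 1 + 1) - xstar = (y - xstar) - γ • f' y := by
      rw [hiter]; abel
    have hc2 : ‖x (t + m + 1 + 1) - xstar‖ ^ 2 ≤ (1 - γ * μstar) * ‖y - xstar‖ ^ 2 := by
      rw [hstep, step_sq]
      have hsq : ‖f' y‖ ^ 2 ≤ (L * ‖y - xstar‖) ^ 2 :=
        pow_le_pow_left₀ (norm_nonneg _) hP2 2
      nlinarith [sq_nonneg ‖y - xstar‖,
        mul_le_mul_of_nonneg_left hP1 (le_of_lt (by positivity : (0:ℝ) < 2 * γ)),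
        mul_le_mul_of_nonneg_left hsq (sq_nonneg γ),
        mul_le_mul_of_nonneg_right (mul_le_mul_of_nonneg_left hγL hγpos.le)
          (sq_nonneg ‖y - xstar‖)]
    have h5 : ‖x (t + m + 1 + 1) - xstar‖ ≤ Real.sqrt ((1 - γ * μstar) * ‖y - xstar‖ ^ 2) := by
      rw [← Real.sqrt_sq (norm_nonneg _)]
      exact Real.sqrt_le_sqrt hc2
    rwa [Real.sqrt_mul h1γ, Real.sqrt_sq (norm_nonneg _)] at h5
  -- distance condition
  set D : ℝ := ‖xdag - xstar‖ with hDdef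
  have hdist2 : r * (1 + Real.sqrt c * ρ) / (1 - ρ) ≤ D := by
    have h1 : Real.sqrt (c * (1 - γ * μstar)) = Real.sqrt c * ρ := Real.sqrt_mul hc.le _
    calc r * (1 + Real.sqrt c * ρ) / (1 - ρ)
        = r * (1 + Real.sqrt (c * (1 - γ * μstar))) / (1 - ρ) := by rw [h1]
      _ ≤ ‖xstar - xdag‖ := hdist
      _ = D := norm_sub_rev _ _
  have hdist3 : r * (1 + Real.sqrt c * ρ) ≤ D * (1 - ρ) :=
    (div_le_iff₀ (by linarith)).mp hdist2
  have htri : ‖y - xstar‖ ≤ r * Real.sqrt c + D := by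
    have h1 : y - xstar = (y - xdag) + (xdag - xstar) := by abel
    calc ‖y - xstar‖ = ‖(y - xdag) + (xdag - xstar)‖ := by rw [h1]
      _ ≤ ‖y - xdag‖ + ‖xdag - xstar‖ := norm_add_le _ _
      _ ≤ r * Real.sqrt c + D := by exact add_le_add_left hybound _
  have hfinal : ‖x (t + m + 1 + 1) - xstar‖ ≤ D - r := by
    have h1 : ρ * ‖y - xstar‖ ≤ ρ * (r * Real.sqrt c + D) :=
      mul_le_mul_of_nonneg_left htri hρnn
    have h2 : ρ * (r * Real.sqrt c + D) ≤ D - r := by nlinarith [Real.sqrt_nonneg c]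
    linarith
  refine ⟨m + 1, Nat.succ_le_succ (Nat.zero_le m), ?_, Or.inr ?_⟩
  · have h : t + (m + 1) = t + m + 1 := by omega
    rwa [h]
  · have h : t + (m + 1) + 1 = t + m + 1 + 1 := by omega
    rwa [h]
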